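/- For any nonzero spinor ψ = (ψ₁, ψ₂) ∈ ℂ², write ψᵗσψ = a + ib with a, b ∈ ℝ³ and c := −ψ̂ᵗσψ ∈ ℝ³. Then ⟨a × b, c⟩ = det(a, b, c) > 0, where a × b is the cross product in ℝ³. -/

import Mathlib

open Matrix Complex

/-- The first Cartan spinor matrix σ₁ = [[1,0],[0,−1]]. -/
noncomputable def sigma1 : Matrix (Fin 2) (Fin 2) ℂ := !![1, 0; 0, -1]

/-- The second Cartan spinor matrix σ₂ = [[i,0],[0,i]]. -/
noncomputable def sigma2 : Matrix (Fin 2) (Fin 2) ℂ := !![Complex.I, 0; 0, Complex.I]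

/-- The third Cartan spinor matrix σ₃ = [[0,−1],[−1,0]]. -/
noncomputable def sigma3 : Matrix (Fin 2) (Fin 2) ℂ := !![0, -1; -1, 0]

/-- For spinors φ, ψ ∈ ℂ², the vector φᵗσψ ∈ ℂ³ whose j-th component is φᵗσⱼψ. -/
noncomputable def spinorBilin (φ ψ : Fin 2 → ℂ) : Fin 3 → ℂ :=
  ![φ ⬝ᵥ sigma1.mulVec ψ, φ ⬝ᵥ sigma2.mulVec ψ, φ ⬝ᵥ sigma3.mulVec ψ]

/-- The mate (conjugate) of a spinor ψ: ψ̂ = (−ψ̄₂, ψ̄₁). -/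
noncomputable def mate (ψ : Fin 2 → ℂ) : Fin 2 → ℂ :=
  ![-(starRingEnd ℂ) (ψ 1), (starRingEnd ℂ) (ψ 0)]

/-- View a triple of reals as a vector in Euclidean 3-space. -/
noncomputable def toE3 (v : Fin 3 → ℝ) : EuclideanSpace ℝ (Fin 3) := WithLp.toLp 2 v

/-- For a nonzero spinor ψ, the triad a, b, c satisfies
⟨a × b, c⟩ = det(a, b, c) > 0. -/
theorem spinor_triad_det_pos (ψ : Fin 2 → ℂ) (hψ : ψ ≠ 0)
    (a b c : Fin 3 → ℝ)
    (ha : ∀ j, a j = (spinorBilin ψ ψ j).re)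
    (hb : ∀ j, b j = (spinorBilin ψ ψ j).im)
    (hc : ∀ j, c j = (-(spinorBilin (mate ψ) ψ j)).re) :
    inner ℝ (toE3 (crossProduct a b)) (toE3 c) = (Matrix.of ![a, b, c]).det ∧
      0 < (Matrix.of ![a, b, c]).det := by
  constructor
  · simp [toE3, PiLp.inner_apply, Fin.sum_univ_three, crossProduct,
      Matrix.det_fin_three]
    ring
  · have h0 : ψ 0 ≠ 0 ∨ ψ 1 ≠ 0 := by
      by_contra h
      push_neg at h
      exact hψ (funext fun i => by fin_cases i <;> simp [h.1, h.2])
    set p := (ψ 0).re; set q := (ψ 0).im; set r := (ψ 1).re; set s := (ψ 1).im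
    have hne : 0 < p^2 + q^2 + r^2 + s^2 := by
      rcases h0 with h | h
      · have : p ≠ 0 ∨ q ≠ 0 := by
          by_contra hh; push_neg at hh; exact h (Complex.ext hh.1 hh.2)
        rcases this with h | h
        · have h2 : 0 < p^2 := by positivity
          nlinarith [sq_nonneg q, sq_nonneg r, sq_nonneg s]
        · have h2 : 0 < q^2 := by positivity
          nlinarith [sq_nonneg p, sq_nonneg r, sq_nonneg s]
      · have : r ≠ 0 ∨ s ≠ 0 := by
          by_contra hh; push_neg at hh; exact h (Complex.ext hh.1 hh.2)
        rcases this with h | h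
        · have h2 : 0 < r^2 := by positivity
          nlinarith [sq_nonneg q, sq_nonneg p, sq_nonneg s]
        · have h2 : 0 < s^2 := by positivity
          nlinarith [sq_nonneg p, sq_nonneg r, sq_nonneg q]
    rw [Matrix.det_fin_three]
    simp only [Matrix.of_apply, Matrix.cons_val', Matrix.cons_val_zero, Matrix.cons_val_one,
      Matrix.head_cons, Matrix.head_fin_const, Matrix.empty_val', Matrix.cons_val_fin_one,
      Matrix.cons_val_two, Matrix.tail_cons]
    rw [ha 0, ha 1, ha 2, hb 0, hb 1, hb 2, hc 0, hc 1, hc 2]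
    simp [spinorBilin, mate, sigma1, sigma2, sigma3, Matrix.mulVec, dotProduct, Matrix.vecHead, Matrix.vecTail,
      Fin.sum_univ_two, Complex.ext_iff, mul_comm, mul_assoc]
    nlinarith [pow_pos hne 3]
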